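/- Define ζ(a) = (−a / (α(a+1)))^a · 1/(a+1) for −1 < a < 0 and a fixed α ∈ (0,1). Then ζ is strictly increasing on (−1, −α/(α+1)) and strictly decreasing on (−α/(α+1), 0); moreover lim_{a→0⁻} ζ(a) = 1 and lim_{a→−1⁺} ζ(a) = α, so the equation ζ(a) = 1 has a unique solution γ in (−1, 0). -/

import Mathlib

open Real Filter Topology

private lemma xlogx : Tendsto (fun x : ℝ => x * Real.log x)
    (nhdsWithin 0 (Set.Ioi 0)) (nhds 0) :=
  (tendsto_log_mul_rpow_nhdsGT_zero one_pos).congr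
    (fun x => by rw [Real.rpow_one, mul_comm])

theorem zeta_shape (α : ℝ) (hα : α ∈ Set.Ioo (0:ℝ) 1)
    (ζ : ℝ → ℝ)
    (hζ : ∀ a ∈ Set.Ioo (-1:ℝ) 0, ζ a = ((-a) / (α * (a + 1))) ^ a * (1 / (a + 1))) :
    StrictMonoOn ζ (Set.Ioo (-1:ℝ) (-α / (α + 1))) ∧
    StrictAntiOn ζ (Set.Ioo (-α / (α + 1)) 0) ∧
    Tendsto ζ (nhdsWithin 0 (Set.Iio (0:ℝ))) (nhds 1) ∧
    Tendsto ζ (nhdsWithin (-1) (Set.Ioi (-1:ℝ))) (nhds α) ∧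
    (∃! a : ℝ, a ∈ Set.Ioo (-1:ℝ) 0 ∧ ζ a = 1) := by
  obtain ⟨hα0, hα1⟩ := hα
  have hα1' : (0:ℝ) < α + 1 := by linarith
  set m : ℝ := -α / (α + 1) with hm
  have hm1 : (-1:ℝ) < m := by
    rw [hm, neg_lt, neg_div, neg_neg, div_lt_one hα1']; linarith
  have hm0 : m < 0 := by
    rw [hm]; exact div_neg_of_neg_of_pos (by linarith) hα1'
  set F : ℝ → ℝ := fun a =>
    a * (Real.log (-a) - Real.log α - Real.log (a+1)) - Real.log (a+1) with hFdef
  -- ζ equals exp ∘ F on the interval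
  have hζF : ∀ a ∈ Set.Ioo (-1:ℝ) 0, ζ a = Real.exp (F a) := by
    intro a ha
    obtain ⟨ha1, ha0⟩ := ha
    have hna : (0:ℝ) < -a := by linarith
    have ha1' : (0:ℝ) < a + 1 := by linarith
    have hb : 0 < (-a) / (α * (a+1)) := div_pos hna (mul_pos hα0 ha1')
    rw [hζ a ⟨ha1, ha0⟩, Real.rpow_def_of_pos hb,
      Real.log_div (ne_of_gt hna) (ne_of_gt (mul_pos hα0 ha1')),
      Real.log_mul (ne_of_gt hα0) (ne_of_gt ha1')]
    rw [hFdef]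
    rw [Real.exp_sub, Real.exp_log ha1']
    rw [mul_comm a]
    ring_nf
  -- derivative of F
  have hF' : ∀ a ∈ Set.Ioo (-1:ℝ) 0,
      HasDerivAt F (Real.log (-a) - Real.log α - Real.log (a+1)) a := by
    intro a ha
    obtain ⟨ha1, ha0⟩ := ha
    have hna : (-a) ≠ 0 := by intro h; nlinarith [neg_eq_zero.mp h]
    have ha0' : a ≠ 0 := ne_of_lt ha0
    have ha1' : (a+1) ≠ 0 := by intro h; nlinarith
    have h1 : HasDerivAt (fun x : ℝ => Real.log (-x)) a⁻¹ a := by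
      have := (Real.hasDerivAt_log hna).comp a (hasDerivAt_neg a)
      refine this.congr_deriv ?_
      ring
    have h2 : HasDerivAt (fun x : ℝ => Real.log (x+1)) (a+1)⁻¹ a := by
      have := (Real.hasDerivAt_log ha1').comp a ((hasDerivAt_id a).add_const 1)
      simpa [Function.comp_def] using this
    have h3 : HasDerivAt (fun x : ℝ =>
        Real.log (-x) - Real.log α - Real.log (x+1)) (a⁻¹ - (a+1)⁻¹) a :=
      (h1.sub_const _).sub h2
    have h4 := ((hasDerivAt_id a).mul h3).sub h2
    refine h4.congr_deriv ?_
    have e : a * a⁻¹ = 1 := mul_inv_cancel₀ ha0'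
    have e2 : (a+1) * (a+1)⁻¹ = 1 := mul_inv_cancel₀ ha1'
    simp only [id_eq]
    linear_combination e - e2
  have hsub1 : Set.Ioo (-1:ℝ) m ⊆ Set.Ioo (-1:ℝ) 0 :=
    Set.Ioo_subset_Ioo le_rfl (le_of_lt hm0)
  have hsub2 : Set.Ioo m (0:ℝ) ⊆ Set.Ioo (-1:ℝ) 0 :=
    Set.Ioo_subset_Ioo (le_of_lt hm1) le_rfl
  -- strict monotonicity of F on (-1, m)
  have hFmono : StrictMonoOn F (Set.Ioo (-1:ℝ) m) := by
    apply strictMonoOn_of_deriv_pos (convex_Ioo _ _)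
    · exact fun x hx => ((hF' x (hsub1 hx)).differentiableAt.continuousAt).continuousWithinAt
    · intro x hx
      rw [interior_Ioo] at hx
      obtain ⟨hx1, hxm⟩ := hx
      have hx0 : x < 0 := lt_trans hxm hm0
      have hx1' : (0:ℝ) < x + 1 := by linarith
      rw [(hF' x (hsub1 ⟨hx1, hxm⟩)).deriv]
      have key : α * (x + 1) < -x := by
        rw [hm, lt_div_iff₀ hα1'] at hxm
        nlinarith
      have h1 : Real.log (α * (x+1)) < Real.log (-x) :=
        Real.log_lt_log (mul_pos hα0 hx1') key
      rw [Real.log_mul (ne_of_gt hα0) (ne_of_gt hx1')] at h1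
      linarith
  have hFanti : StrictAntiOn F (Set.Ioo m (0:ℝ)) := by
    apply strictAntiOn_of_deriv_neg (convex_Ioo _ _)
    · exact fun x hx => ((hF' x (hsub2 hx)).differentiableAt.continuousAt).continuousWithinAt
    · intro x hx
      rw [interior_Ioo] at hx
      obtain ⟨hxm, hx0⟩ := hx
      have hx1 : (-1:ℝ) < x := lt_trans hm1 hxm
      have hx1' : (0:ℝ) < x + 1 := by linarith
      have hnx : (0:ℝ) < -x := by linarith
      rw [(hF' x (hsub2 ⟨hxm, hx0⟩)).deriv]
      have key : -x < α * (x + 1) := by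
        rw [hm, div_lt_iff₀ hα1'] at hxm
        nlinarith
      have h1 : Real.log (-x) < Real.log (α * (x+1)) := Real.log_lt_log hnx key
      rw [Real.log_mul (ne_of_gt hα0) (ne_of_gt hx1')] at h1
      linarith
  have hmono : StrictMonoOn ζ (Set.Ioo (-1:ℝ) m) := by
    intro x hx y hy hxy
    rw [hζF x (hsub1 hx), hζF y (hsub1 hy)]
    exact Real.exp_lt_exp.mpr (hFmono hx hy hxy)
  have hanti : StrictAntiOn ζ (Set.Ioo m (0:ℝ)) := by
    intro x hx y hy hxy
    rw [hζF x (hsub2 hx), hζF y (hsub2 hy)]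
    exact Real.exp_lt_exp.mpr (hFanti hx hy hxy)
  -- limit at 0⁻
  have hneg : Tendsto (fun a : ℝ => -a) (nhdsWithin 0 (Set.Iio 0))
      (nhdsWithin 0 (Set.Ioi 0)) := by
    apply tendsto_nhdsWithin_of_tendsto_nhds_of_eventually_within
    · simpa using (continuous_neg.tendsto (0:ℝ)).mono_left nhdsWithin_le_nhds
    · filter_upwards [self_mem_nhdsWithin] with x hx
      simpa using hx
  have h1a : Tendsto (fun a : ℝ => a * Real.log (-a)) (nhdsWithin 0 (Set.Iio 0)) (nhds 0) := by
    have h := (xlogx.comp hneg).neg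
    simp only [Function.comp_def, neg_mul, neg_neg, neg_zero] at h
    exact h
  have hlogc : ContinuousAt (fun a : ℝ => Real.log (a+1)) 0 :=
    (Real.continuousAt_log (by norm_num)).comp (continuousAt_id.add continuousAt_const)
  have h2a : Tendsto (fun a : ℝ =>
      a * Real.log α + a * Real.log (a+1) + Real.log (a+1)) (nhds (0:ℝ)) (nhds 0) := by
    have hc : ContinuousAt (fun a : ℝ =>
        a * Real.log α + a * Real.log (a+1) + Real.log (a+1)) 0 :=
      ((continuousAt_id.mul continuousAt_const).add (continuousAt_id.mul hlogc)).add hlogc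
    have := hc.tendsto
    simpa using this
  have hF0 : Tendsto F (nhdsWithin 0 (Set.Iio 0)) (nhds 0) := by
    have h := h1a.sub (h2a.mono_left nhdsWithin_le_nhds)
    rw [sub_zero] at h
    exact h.congr (fun a => by rw [hFdef]; ring)
  have hζ0 : Tendsto ζ (nhdsWithin 0 (Set.Iio (0:ℝ))) (nhds 1) := by
    have he : Tendsto (fun a => Real.exp (F a)) (nhdsWithin 0 (Set.Iio (0:ℝ))) (nhds 1) := by
      simpa [Function.comp_def] using (Real.continuous_exp.continuousAt.tendsto.comp hF0)
    apply he.congr'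
    filter_upwards [Ioo_mem_nhdsLT_of_mem (Set.mem_Ioc.mpr ⟨by norm_num, le_rfl⟩ :
      (0:ℝ) ∈ Set.Ioc (-1) 0)] with a ha
    exact (hζF a ha).symm
  -- limit at (-1)⁺
  have hshift : Tendsto (fun a : ℝ => a + 1) (nhdsWithin (-1) (Set.Ioi (-1:ℝ)))
      (nhdsWithin 0 (Set.Ioi 0)) := by
    apply tendsto_nhdsWithin_of_tendsto_nhds_of_eventually_within
    · have h : ContinuousAt (fun a : ℝ => a + 1) (-1) :=
        continuousAt_id.add continuousAt_const
      have h2 := h.tendsto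
      norm_num at h2
      exact h2.mono_left nhdsWithin_le_nhds
    · filter_upwards [self_mem_nhdsWithin] with x hx
      simp only [Set.mem_Ioi] at hx ⊢
      linarith
  have h1b : Tendsto (fun a : ℝ => (a+1) * Real.log (a+1))
      (nhdsWithin (-1) (Set.Ioi (-1:ℝ))) (nhds 0) := xlogx.comp hshift
  have h2b : Tendsto (fun a : ℝ => a * Real.log (-a) - a * Real.log α)
      (nhds (-1:ℝ)) (nhds (Real.log α)) := by
    have hc : ContinuousAt (fun a : ℝ => a * Real.log (-a) - a * Real.log α) (-1) := by
      have hl : ContinuousAt (fun a : ℝ => Real.log (-a)) (-1) :=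
        (Real.continuousAt_log (by norm_num)).comp continuousAt_neg
      exact (continuousAt_id.mul hl).sub (continuousAt_id.mul continuousAt_const)
    have := hc.tendsto
    simpa using this
  have hF1 : Tendsto F (nhdsWithin (-1) (Set.Ioi (-1:ℝ))) (nhds (Real.log α)) := by
    have h := (h2b.mono_left nhdsWithin_le_nhds).sub h1b
    rw [sub_zero] at h
    exact h.congr (fun a => by rw [hFdef]; ring)
  have hζ1 : Tendsto ζ (nhdsWithin (-1) (Set.Ioi (-1:ℝ))) (nhds α) := by
    have he : Tendsto (fun a => Real.exp (F a))
        (nhdsWithin (-1) (Set.Ioi (-1:ℝ))) (nhds α) := by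
      have := Real.continuous_exp.continuousAt.tendsto.comp hF1
      simpa [Real.exp_log hα0, Function.comp_def] using this
    apply he.congr'
    filter_upwards [Ioo_mem_nhdsGT_of_mem (Set.mem_Ico.mpr ⟨le_rfl, by norm_num⟩ :
      (-1:ℝ) ∈ Set.Ico (-1) 0)] with a ha
    exact (hζF a ha).symm
  -- value at m
  have hmIoo : m ∈ Set.Ioo (-1:ℝ) 0 := ⟨hm1, hm0⟩
  have hm1' : m + 1 = 1 / (α+1) := by
    rw [hm]; field_simp; ring
  have hζm : ζ m = α + 1 := by
    rw [hζ m hmIoo]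
    have hr : (-m) / (α * (m+1)) = 1 := by
      rw [hm1', hm]
      field_simp
    rw [hr, Real.one_rpow, one_mul, hm1', one_div_one_div]
  -- ζ > 1 on [m, 0)
  have hge1 : ∀ x ∈ Set.Ioo m (0:ℝ), 1 ≤ ζ x := by
    intro x hx
    refine le_of_tendsto hζ0 ?_
    filter_upwards [Ioo_mem_nhdsLT_of_mem (Set.mem_Ioc.mpr ⟨hx.2, le_rfl⟩ :
      (0:ℝ) ∈ Set.Ioc x 0)] with z hz
    exact le_of_lt (hanti hx ⟨lt_trans hx.1 hz.1, hz.2⟩ hz.1)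
  have hgt1 : ∀ x ∈ Set.Ico m (0:ℝ), 1 < ζ x := by
    intro x hx
    rcases eq_or_lt_of_le hx.1 with heq | hmx
    · rw [← heq, hζm]; linarith
    · have hx0 : x < 0 := hx.2
      have hx2 : x/2 ∈ Set.Ioo m (0:ℝ) := ⟨by linarith, by linarith⟩
      calc (1:ℝ) ≤ ζ (x/2) := hge1 _ hx2
        _ < ζ x := hanti ⟨hmx, hx0⟩ hx2 (by linarith)
  -- existence of the root
  have hev : ∀ᶠ b in nhdsWithin (-1) (Set.Ioi (-1:ℝ)), ζ b < 1 ∧ b ∈ Set.Ioo (-1:ℝ) m := by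
    filter_upwards [hζ1.eventually_lt_const hα1,
      Ioo_mem_nhdsGT_of_mem (Set.mem_Ico.mpr ⟨le_rfl, hm1⟩ :
        (-1:ℝ) ∈ Set.Ico (-1) m)] with b h1 h2
    exact ⟨h1, h2⟩
  obtain ⟨b, hb1, hbI⟩ := hev.exists
  have hsubIcc : Set.Icc b m ⊆ Set.Ioo (-1:ℝ) 0 :=
    fun x hx => ⟨lt_of_lt_of_le hbI.1 hx.1, lt_of_le_of_lt hx.2 hm0⟩
  have hcont : ContinuousOn ζ (Set.Icc b m) := by
    apply ContinuousOn.congr (f := fun a => Real.exp (F a))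
    · intro x hx
      exact (Real.continuous_exp.continuousAt.comp
        (hF' x (hsubIcc hx)).differentiableAt.continuousAt).continuousWithinAt
    · intro x hx
      exact hζF x (hsubIcc hx)
  have h1mem : (1:ℝ) ∈ Set.Icc (ζ b) (ζ m) := ⟨le_of_lt hb1, by rw [hζm]; linarith⟩
  obtain ⟨a, haI, ha1⟩ := intermediate_value_Icc (le_of_lt hbI.2) hcont h1mem
  have haIoo : a ∈ Set.Ioo (-1:ℝ) 0 := hsubIcc haI
  have key : ∀ x ∈ Set.Ioo (-1:ℝ) 0, ζ x = 1 → x < m := by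
    intro x hx hx1
    by_contra h
    push_neg at h
    exact absurd hx1 (ne_of_gt (hgt1 x ⟨h, hx.2⟩))
  refine ⟨hmono, hanti, hζ0, hζ1, a, ⟨haIoo, ha1⟩, ?_⟩
  rintro a' ⟨ha'I, ha'1⟩
  exact hmono.injOn ⟨ha'I.1, key a' ha'I ha'1⟩ ⟨haIoo.1, key a haIoo ha1⟩ (ha'1.trans ha1.symm)
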